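/- Suppose a positive integer n with n ≡ 0 (mod 18) cannot be expressed as the sum of two squares and at most two powers of 2. Then for every integer α ≥ 0, the number 2^α · n also cannot be expressed as the sum of two squares and at most two powers of 2. -/
import Mathlib

/-- A natural number `m` is a sum of two squares and at most two powers of 2. -/
def IsSumTwoSquaresAddAtMostTwoPow (m : ℕ) : Prop :=
  ∃ x y : ℤ, (m : ℤ) = x ^ 2 + y ^ 2 ∨ (∃ a : ℕ, (m : ℤ) = x ^ 2 + y ^ 2 + 2 ^ a) ∨
    ∃ a b : ℕ, (m : ℤ) = x ^ 2 + y ^ 2 + 2 ^ a + 2 ^ b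

lemma zmod2_aux : ∀ u v : ZMod 2, u^2+v^2 = 0 → u + v = 0 := by decide
lemma zmod4_aux : ∀ u v : ZMod 4, u^2+v^2+1 ≠ 0 := by decide
lemma zmod9_aux : ∀ u v : ZMod 9, u^2+v^2+3 ≠ 0 := by decide

lemma half_sq (x y : ℤ) (hd : (2:ℤ) ∣ x^2 + y^2) : ∃ u v : ℤ, x^2+y^2 = 2*(u^2+v^2) := by
  have h0 : ((x^2+y^2 : ℤ) : ZMod 2) = 0 := (ZMod.intCast_zmod_eq_zero_iff_dvd _ 2).mpr hd
  push_cast at h0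
  have h1 : ((x + y : ℤ) : ZMod 2) = 0 := by push_cast; exact zmod2_aux _ _ h0
  obtain ⟨u, hu⟩ := (ZMod.intCast_zmod_eq_zero_iff_dvd _ 2).mp h1
  exact ⟨u, x - u, by linear_combination (y + 2*u - x) * hu⟩

lemma cast_eq0 {N : ℕ} [NeZero N] (k : ℕ) (z : ℤ) (h : (k:ℤ) = z) (hd : N ∣ k) :
    (z : ZMod N) = 0 := by
  have : ((k:ℤ) : ZMod N) = 0 := by
    rw [Int.cast_natCast]
    exact (ZMod.natCast_eq_zero_iff _ _).mpr hd
  rw [h] at this; exact this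

lemma halve3 (m : ℕ) (h18 : 18 ∣ m) (x y : ℤ) (a b : ℕ) (hab : a ≤ b)
    (h : ((2*m:ℕ):ℤ) = x^2+y^2+2^a+2^b) : IsSumTwoSquaresAddAtMostTwoPow m := by
  rcases Nat.eq_zero_or_pos a with rfl | ha
  · rcases b with _ | b
    · -- a = 0, b = 0 : halve, getting m = u^2+v^2+2^0
      have hd : (2:ℤ) ∣ x^2+y^2 := ⟨(m:ℤ) - 1, by push_cast at h ⊢; linarith⟩
      obtain ⟨u, v, huv⟩ := half_sq x y hd
      refine ⟨u, v, Or.inr (Or.inl ⟨0, ?_⟩)⟩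
      push_cast at h
      norm_num at h ⊢
      linarith
    · rcases b with _ | b
      · -- a = 0, b = 1 : impossible mod 9
        exfalso
        have h9 := cast_eq0 (N := 9) _ _ h (by omega)
        push_cast at h9
        exact zmod9_aux x y (by linear_combination h9)
      · -- a = 0, b ≥ 2 : impossible mod 4
        exfalso
        have h4 := cast_eq0 (N := 4) _ _ h (by omega)
        push_cast at h4
        have hb : (2:ZMod 4)^(b+1+1) = 0 := by
          rw [pow_succ, pow_succ, mul_assoc]
          exact mul_eq_zero_of_right _ (by decide)
        rw [hb] at h4
        exact zmod4_aux x y (by linear_combination h4)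
  · -- a ≥ 1, hence b ≥ 1 : halve
    obtain ⟨a', rfl⟩ : ∃ a', a = a' + 1 := ⟨a - 1, by omega⟩
    obtain ⟨b', rfl⟩ : ∃ b', b = b' + 1 := ⟨b - 1, by omega⟩
    have hpa : (2:ℤ)^(a'+1) = 2*2^a' := by ring
    have hpb : (2:ℤ)^(b'+1) = 2*2^b' := by ring
    push_cast at h
    have hd : (2:ℤ) ∣ x^2+y^2 := ⟨(m:ℤ) - 2^a' - 2^b', by linarith⟩
    obtain ⟨u, v, huv⟩ := half_sq x y hd
    refine ⟨u, v, Or.inr (Or.inr ⟨a', b', ?_⟩)⟩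
    push_cast
    linarith

lemma halve (m : ℕ) (h18 : 18 ∣ m) (h : IsSumTwoSquaresAddAtMostTwoPow (2*m)) :
    IsSumTwoSquaresAddAtMostTwoPow m := by
  obtain ⟨x, y, h | ⟨a, h⟩ | ⟨a, b, h⟩⟩ := h
  · -- no powers: halve
    have hd : (2:ℤ) ∣ x^2+y^2 := ⟨(m:ℤ), by push_cast at h ⊢; linarith⟩
    obtain ⟨u, v, huv⟩ := half_sq x y hd
    refine ⟨u, v, Or.inl ?_⟩
    push_cast at h
    linarith
  · rcases a with _ | a
    · -- one power 2^0 : impossible mod 4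
      exfalso
      have h4 := cast_eq0 (N := 4) _ _ h (by omega)
      push_cast at h4
      exact zmod4_aux x y (by linear_combination h4)
    · -- one power 2^(a+1) : halve
      have hpa : (2:ℤ)^(a+1) = 2*2^a := by ring
      push_cast at h
      have hd : (2:ℤ) ∣ x^2+y^2 := ⟨(m:ℤ) - 2^a, by linarith⟩
      obtain ⟨u, v, huv⟩ := half_sq x y hd
      refine ⟨u, v, Or.inr (Or.inl ⟨a, ?_⟩)⟩
      push_cast
      linarith
  · rcases le_total a b with hab | hab
    · exact halve3 m h18 x y a b hab h
    · exact halve3 m h18 y x b a hab (by push_cast at h ⊢; linarith)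

theorem tower_two_pow (n : ℕ) (hn : 0 < n) (h18 : n % 18 = 0)
    (h : ¬ IsSumTwoSquaresAddAtMostTwoPow n) :
    ∀ α : ℕ, ¬ IsSumTwoSquaresAddAtMostTwoPow (2 ^ α * n) := by
  intro α
  induction α with
  | zero => simpa using h
  | succ k ih =>
    intro hr
    apply ih
    have he : 2 ^ (k+1) * n = 2 * (2 ^ k * n) := by ring
    rw [he] at hr
    exact halve _ ((Nat.dvd_of_mod_eq_zero h18).mul_left _) hr
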